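/- Let K be a finitely generated subgroup of the free group F_A with Stallings automaton S(K) = (Q, A, δ, q₀), let π be a set of primes, and let Π' be the set of positive integers all of whose prime factors lie outside π. The following are equivalent: (i) every subgroup of the transition monoid M(K) is a π-group; (ii) for all q ∈ Q, all words v over Ã, and all n ∈ Π', if v^n labels a loop at q then v labels a loop at q; (iii) for all x ∈ F_A and all n ∈ Π', x^n ∈ K implies x ∈ K. -/

import Mathlib

/-- Reading a word over `Ã = A × Bool` from a state of a partial deterministic automaton. -/
def readWord {Q A : Type} (δ : Q → A × Bool → Option Q) : Q → List (A × Bool) → Option Q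
  | q, [] => some q
  | q, x :: w =>
    match δ q x with
    | none => none
    | some q' => readWord δ q' w

/-- The `n`-th power of a word. -/
def wpow {α : Type} (w : List α) (n : ℕ) : List α := (List.replicate n w).flatten

/-- Domain of the partial transformation `δ_w`. -/
def pdom {Q A : Type} (δ : Q → A × Bool → Option Q) (w : List (A × Bool)) : Set Q :=
  {q | (readWord δ q w).isSome}

/-- Image of the partial transformation `δ_w`. -/
def pim {Q A : Type} (δ : Q → A × Bool → Option Q) (w : List (A × Bool)) : Set Q :=
  {q | ∃ p, readWord δ p w = some q}

/-- `n` is a `π'`-number: a positive integer all of whose prime factors lie outside `π`. -/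
def IsPiPrimeNumber (π : Set ℕ) (n : ℕ) : Prop :=
  0 < n ∧ ∀ p : ℕ, p.Prime → p ∣ n → p ∉ π


set_option linter.unusedSectionVars false
set_option linter.unnecessarySeqFocus false


section Basic
variable {Q A : Type} (δ : Q → A × Bool → Option Q)

@[simp] lemma readWord_nil (q : Q) : readWord δ q [] = some q := rfl

lemma readWord_cons (q : Q) (x : A × Bool) (w : List (A × Bool)) :
    readWord δ q (x :: w) = (δ q x).bind (fun r => readWord δ r w) := by
  cases h : δ q x <;> simp [readWord, h]

lemma readWord_append (q : Q) (u w : List (A × Bool)) :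
    readWord δ q (u ++ w) = (readWord δ q u).bind (fun r => readWord δ r w) := by
  induction u generalizing q with
  | nil => simp
  | cons x t ih =>
    rw [List.cons_append, readWord_cons, readWord_cons]
    cases δ q x with
    | none => simp
    | some r => simp [ih r]

@[simp] lemma wpow_zero {α : Type} (v : List α) : wpow v 0 = [] := rfl

lemma wpow_succ {α : Type} (v : List α) (n : ℕ) : wpow v (n+1) = v ++ wpow v n := by
  simp [wpow, List.replicate_succ]

lemma wpow_one {α : Type} (v : List α) : wpow v 1 = v := by simp [wpow]

lemma wpow_add {α : Type} (v : List α) (m n : ℕ) :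
    wpow v (m + n) = wpow v m ++ wpow v n := by
  unfold wpow; rw [List.replicate_add, List.flatten_append]

lemma wpow_mul {α : Type} (v : List α) (m n : ℕ) :
    wpow v (m * n) = wpow (wpow v m) n := by
  induction n with
  | zero => simp
  | succ n ih => rw [show m*(n+1) = m + m*n by ring, wpow_add, wpow_succ, ih]

end Basic

section Inv
variable {Q A : Type} {δ : Q → A × Bool → Option Q}
  (hinv : ∀ (p q : Q) (a : A) (b : Bool), δ p (a, b) = some q ↔ δ q (a, !b) = some p)

lemma invRev_cons (x : A × Bool) (w : List (A × Bool)) :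
    FreeGroup.invRev (x :: w) = FreeGroup.invRev w ++ [(x.1, !x.2)] := by
  simp [FreeGroup.invRev]

include hinv

lemma readWord_invRev {p q : Q} {w : List (A × Bool)} :
    readWord δ p w = some q ↔ readWord δ q (FreeGroup.invRev w) = some p := by
  induction w generalizing p with
  | nil =>
    simp only [FreeGroup.invRev_empty, readWord_nil, Option.some_inj]
    exact ⟨Eq.symm, Eq.symm⟩
  | cons x t ih =>
    rw [invRev_cons, readWord_append, readWord_cons]
    constructor
    · intro h
      cases hd : δ p x with
      | none => rw [hd] at h; simp at h
      | some r =>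
        rw [hd] at h; simp only [Option.bind_some] at h
        rw [(ih).1 h]
        simp only [Option.bind_some]
        have : δ r (x.1, !x.2) = some p := by
          rw [← hinv]; simpa using hd
        simp [readWord_cons, this]
    · intro h
      cases hr : readWord δ q (FreeGroup.invRev t) with
      | none => rw [hr] at h; simp at h
      | some r =>
        rw [hr] at h; simp only [Option.bind_some] at h
        have h' : δ r (x.1, !x.2) = some p := by
          cases hd : δ r (x.1, !x.2) <;> simp [readWord, hd] at h <;> simp [h]
        have hd : δ p x = some r := by
          have := (hinv r p x.1 (!x.2)).1 h'
          simpa using this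
        rw [hd, Option.bind_some]
        exact ih.2 hr

/-- one cancellation step preserves runs -/
lemma readWord_cancel {p r : Q} {w₁ w₂ : List (A × Bool)} {a : A × Bool}
    (h : readWord δ p (w₁ ++ a :: (a.1, !a.2) :: w₂) = some r) :
    readWord δ p (w₁ ++ w₂) = some r := by
  rw [readWord_append] at h ⊢
  cases h1 : readWord δ p w₁ with
  | none => rw [h1] at h; simp at h
  | some u =>
    rw [h1] at h; simp only [Option.bind_some] at h ⊢
    rw [readWord_cons] at h
    cases hd : δ u a with
    | none => rw [hd] at h; simp at h
    | some u₁ =>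
      rw [hd] at h; simp only [Option.bind_some, readWord_cons] at h
      have h2 : δ u₁ (a.1, !a.2) = some u := by
        rw [← hinv]; simpa using hd
      rw [h2] at h; simpa using h
end Inv


def pstep {Q A : Type} (δ : Q → A × Bool → Option Q) (v : List (A × Bool)) :
    Option Q → Option Q := fun o => o.bind fun q => readWord δ q v

section Iter
variable {Q A : Type} {δ : Q → A × Bool → Option Q}

@[simp] lemma pstep_none (v : List (A × Bool)) : pstep δ v none = none := rfl

lemma pstep_iterate (v : List (A × Bool)) (n : ℕ) (o : Option Q) :
    (pstep δ v)^[n] o = o.bind fun q => readWord δ q (wpow v n) := by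
  induction n generalizing o with
  | zero => cases o <;> rfl
  | succ n ih =>
    rw [Function.iterate_succ_apply, ih, wpow_succ]
    cases o with
    | none => simp [pstep]
    | some q =>
      simp only [Option.bind_some, pstep, readWord_append]

lemma pstep_iterate_some (v : List (A × Bool)) (n : ℕ) (q : Q) :
    (pstep δ v)^[n] (some q) = readWord δ q (wpow v n) := by
  rw [pstep_iterate]; rfl

@[simp] lemma pstep_iterate_none (v : List (A × Bool)) (n : ℕ) :
    (pstep δ v)^[n] (none : Option Q) = none := by rw [pstep_iterate]; rfl

variable (hinv : ∀ (p q : Q) (a : A) (b : Bool), δ p (a, b) = some q ↔ δ q (a, !b) = some p)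
include hinv

lemma walkback {v : List (A × Bool)} {k : ℕ} {p r : Q}
    (h : (pstep δ v)^[k] (some p) = some r) :
    (pstep δ (FreeGroup.invRev v))^[k] (some r) = some p := by
  induction k generalizing p with
  | zero => simpa using h.symm
  | succ k ih =>
    rw [Function.iterate_succ_apply] at h
    cases h1 : pstep δ v (some p) with
    | none => rw [h1] at h; simp at h
    | some p₁ =>
      rw [h1] at h
      rw [Function.iterate_succ_apply', ih h]
      simp only [pstep, Option.bind_some] at h1 ⊢
      exact (readWord_invRev hinv).1 h1

/-- if a long run from q is defined then q is periodic -/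
lemma periodic_of_long [Fintype Q] {v : List (A × Bool)} {j : ℕ} {q : Q}
    (hj : Fintype.card Q ≤ j) (h : ((pstep δ v)^[j] (some q)).isSome) :
    ∃ d, 0 < d ∧ (pstep δ v)^[d] (some q) = some q := by
  set F := pstep δ v with hF
  have hdef : ∀ i ≤ j, (F^[i] (some q)).isSome := by
    intro i hi
    rcases Option.isSome_iff_exists.mp h with ⟨r, hr⟩
    rcases Nat.exists_eq_add_of_le hi with ⟨c, rfl⟩
    rw [Nat.add_comm, Function.iterate_add_apply] at hr
    cases hx : F^[i] (some q) with
    | none => rw [hx, hF, pstep_iterate_none] at hr; exact absurd hr (by simp)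
    | some x => simp [hx]
  -- pigeonhole on i ↦ F^[i] (some q) for i ∈ Fin (card Q + 1)
  have hcard : Fintype.card (Fin (Fintype.card Q + 1)) > Fintype.card Q := by simp
  obtain ⟨i₁, i₂, hne, heq⟩ :
      ∃ i₁ i₂ : Fin (Fintype.card Q + 1), i₁ ≠ i₂ ∧
        F^[(i₁ : ℕ)] (some q) = F^[(i₂ : ℕ)] (some q) := by
    have : ¬ Function.Injective (fun i : Fin (Fintype.card Q + 1) =>
        (F^[(i : ℕ)] (some q)).get (hdef i (by omega))) := by
      intro hinj
      have := Fintype.card_le_of_injective _ hinj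
      simp at this
    rw [Function.not_injective_iff] at this
    obtain ⟨i₁, i₂, hfeq, hne⟩ := this
    refine ⟨i₁, i₂, hne, ?_⟩
    have h1 := Option.some_get (hdef i₁ (by omega))
    have h2 := Option.some_get (hdef i₂ (by omega))
    rw [← h1, ← h2, hfeq]
  -- wlog i₁ < i₂
  rcases Ne.lt_or_gt hne with hlt | hlt
  all_goals {
    first
    | (have ha : (i₁:ℕ) < (i₂:ℕ) := hlt
       set a := (i₁:ℕ); set b := (i₂:ℕ))
    | (have ha : (i₂:ℕ) < (i₁:ℕ) := hlt
       set a := (i₂:ℕ); set b := (i₁:ℕ)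
       replace heq := heq.symm)
    -- F^[a] (some q) = F^[b] (some q), a < b ≤ j
    obtain ⟨pa, hpa⟩ := Option.isSome_iff_exists.mp (hdef a (by omega))
    have hper : F^[b - a] (some pa) = some pa := by
      have : F^[b] (some q) = F^[(b-a) + a] (some q) := by congr 1; omega
      rw [Function.iterate_add_apply, hpa] at this
      rw [← heq, hpa] at this; exact this.symm
    set e := b - a with he
    have hepos : 0 < e := by omega
    refine ⟨e * (a + 1), by positivity, ?_⟩
    have hmul : F^[e * (a+1)] (some pa) = some pa := by
      have : Function.IsPeriodicPt F e (some pa) := hper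
      exact (this.mul_const (a+1))
    -- F^[a] (F^[e(a+1)] (some q)) = F^[e(a+1)] (F^[a] (some q)) = some pa
    have hy : F^[a] (F^[e * (a+1)] (some q)) = some pa := by
      rw [← Function.iterate_add_apply, Nat.add_comm, Function.iterate_add_apply, hpa, hmul]
    cases hyv : F^[e * (a+1)] (some q) with
    | none => rw [hyv, hF, pstep_iterate_none] at hy; exact absurd hy (by simp)
    | some r =>
      rw [hyv] at hy
      have w1 := walkback hinv hy
      have w2 := walkback hinv hpa
      rw [w1] at w2
      exact w2
  }

end Iter

def per {Q A : Type} (δ : Q → A × Bool → Option Q) (v : List (A × Bool)) : Set Q :=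
  {q | ∃ d, 0 < d ∧ (pstep δ v)^[d] (some q) = some q}

section Per
variable {Q A : Type} {δ : Q → A × Bool → Option Q}

lemma per_isSome {v : List (A × Bool)} {q : Q} (hq : q ∈ per δ v) (j : ℕ) :
    ((pstep δ v)^[j] (some q)).isSome := by
  obtain ⟨d, hd, hper⟩ := hq
  have hbig : (pstep δ v)^[d * (j+1)] (some q) = some q :=
    (show Function.IsPeriodicPt _ d _ from hper).mul_const (j+1)
  have hj : j ≤ d * (j+1) := by nlinarith
  rw [show d * (j+1) = (d * (j+1) - j) + j by omega, Function.iterate_add_apply] at hbig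
  cases hx : (pstep δ v)^[j] (some q) with
  | none => rw [hx, pstep_iterate_none] at hbig; exact absurd hbig (by simp)
  | some x => simp

lemma invRev_wpow (v : List (A × Bool)) (j : ℕ) :
    FreeGroup.invRev (wpow v j) = wpow (FreeGroup.invRev v) j := by
  induction j with
  | zero => simp [FreeGroup.invRev]
  | succ n ih =>
    rw [wpow_succ, show n + 1 = n + 1 by rfl, wpow_add, wpow_one, ← ih]
    simp [FreeGroup.invRev]

variable (hinv : ∀ (p q : Q) (a : A) (b : Bool), δ p (a, b) = some q ↔ δ q (a, !b) = some p)
include hinv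

lemma pim_eq_pdom_invRev (w : List (A × Bool)) :
    pim δ w = pdom δ (FreeGroup.invRev w) := by
  ext q
  simp only [pim, pdom, Set.mem_setOf_eq, Option.isSome_iff_exists]
  constructor
  · rintro ⟨p, hp⟩; exact ⟨p, (readWord_invRev hinv).1 hp⟩
  · rintro ⟨p, hp⟩
    exact ⟨p, (readWord_invRev hinv).2 (by simpa [FreeGroup.invRev_invRev] using hp)⟩

lemma per_invRev (v : List (A × Bool)) : per δ (FreeGroup.invRev v) = per δ v := by
  ext q
  constructor
  · rintro ⟨d, hd, hper⟩
    exact ⟨d, hd, by simpa [FreeGroup.invRev_invRev] using walkback hinv hper⟩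
  · rintro ⟨d, hd, hper⟩
    exact ⟨d, hd, walkback hinv hper⟩

lemma pdom_wpow_eq_per [Fintype Q] {v : List (A × Bool)} {j : ℕ} (hj : Fintype.card Q ≤ j) :
    pdom δ (wpow v j) = per δ v := by
  ext q
  constructor
  · intro hq
    have : ((pstep δ v)^[j] (some q)).isSome := by
      rw [pstep_iterate_some]; exact hq
    exact periodic_of_long hinv hj this
  · intro hq
    have := per_isSome hq j
    rw [pstep_iterate_some] at this
    exact this

lemma pdom_eq_pim_wpow [Fintype Q] {v : List (A × Bool)} {j : ℕ} (hj : Fintype.card Q ≤ j) :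
    pdom δ (wpow v j) = pim δ (wpow v j) := by
  rw [pdom_wpow_eq_per hinv hj, pim_eq_pdom_invRev hinv, invRev_wpow,
    pdom_wpow_eq_per hinv hj, per_invRev hinv]

end Per


lemma pi_decomp (π : Set ℕ) (d : ℕ) (hd : 0 < d) :
    ∃ s t : ℕ, d = s * t ∧ 0 < s ∧ (∀ p : ℕ, p.Prime → p ∣ s → p ∈ π) ∧
      IsPiPrimeNumber π t := by
  classical
  set S := d.primeFactors.filter (· ∈ π) with hS
  set T := d.primeFactors.filter (¬ · ∈ π) with hT
  refine ⟨∏ p ∈ S, p ^ d.factorization p, ∏ p ∈ T, p ^ d.factorization p, ?_, ?_, ?_, ?_, ?_⟩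
  · rw [Finset.prod_filter_mul_prod_filter_not]
    rw [← Nat.support_factorization]
    exact (Nat.factorization_prod_pow_eq_self hd.ne').symm
  · exact Finset.prod_pos fun p hp =>
      pow_pos (Nat.pos_of_mem_primeFactors (Finset.mem_filter.mp hp).1) _
  · intro p hp hdvd
    obtain ⟨q, hq, hpq⟩ := (hp.prime).exists_mem_finset_dvd hdvd
    have hqprime : q.Prime := Nat.prime_of_mem_primeFactors (Finset.mem_filter.mp hq).1
    have : p = q := (Nat.prime_dvd_prime_iff_eq hp hqprime).mp (hp.dvd_of_dvd_pow hpq)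
    exact this ▸ (Finset.mem_filter.mp hq).2
  · exact Finset.prod_pos fun p hp =>
      pow_pos (Nat.pos_of_mem_primeFactors (Finset.mem_filter.mp hp).1) _
  · intro p hp hdvd
    obtain ⟨q, hq, hpq⟩ := (hp.prime).exists_mem_finset_dvd hdvd
    have hqprime : q.Prime := Nat.prime_of_mem_primeFactors (Finset.mem_filter.mp hq).1
    have : p = q := (Nat.prime_dvd_prime_iff_eq hp hqprime).mp (hp.dvd_of_dvd_pow hpq)
    exact this ▸ (Finset.mem_filter.mp hq).2

section Impl
variable {Q A : Type} [Fintype Q] {δ : Q → A × Bool → Option Q}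
  (hinv : ∀ (p q : Q) (a : A) (b : Bool), δ p (a, b) = some q ↔ δ q (a, !b) = some p)
include hinv

lemma imp_i_ii (π : Set ℕ)
    (h1 : ∀ w : List (A × Bool), pdom δ w = pim δ w →
      ∃ m : ℕ, 0 < m ∧ (∀ p : ℕ, p.Prime → p ∣ m → p ∈ π) ∧
        ∀ q ∈ pdom δ w, readWord δ q (wpow w m) = some q) :
    ∀ (q : Q) (v : List (A × Bool)) (n : ℕ), IsPiPrimeNumber π n →
      readWord δ q (wpow v n) = some q → readWord δ q v = some q := by
  intro q v n hn hloop
  set F := pstep δ v with hF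
  have hpn : Function.IsPeriodicPt F n (some q) := by
    show F^[n] (some q) = some q
    rw [hF, pstep_iterate_some]; exact hloop
  set d := Function.minimalPeriod F (some q) with hdd
  have hd : d ∣ n := hpn.minimalPeriod_dvd
  have hdpos : 0 < d := hpn.minimalPeriod_pos hn.1
  set j := 1 + n * Fintype.card Q with hj
  have hjcard : Fintype.card Q ≤ j := by
    have h1n := hn.1
    have : 1 * Fintype.card Q ≤ n * Fintype.card Q := Nat.mul_le_mul_right _ h1n
    omega
  obtain ⟨m, hm, hmpi, hfix⟩ := h1 (wpow v j) (pdom_eq_pim_wpow hinv hjcard)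
  have hqdom : q ∈ pdom δ (wpow v j) := by
    rw [pdom_wpow_eq_per hinv hjcard]
    exact ⟨n, hn.1, hpn⟩
  have hjm := hfix q hqdom
  rw [← wpow_mul] at hjm
  have hpjm : Function.IsPeriodicPt F (j * m) (some q) := by
    show F^[j*m] (some q) = some q
    rw [hF, pstep_iterate_some]; exact hjm
  have hdjm : d ∣ j * m := hpjm.minimalPeriod_dvd
  have hdm : d ∣ m := by
    have key : j * m = m + n * Fintype.card Q * m := by rw [hj]; ring
    have h1' : d ∣ n * Fintype.card Q * m := (hd.mul_right (Fintype.card Q)).mul_right m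
    have hsub : j * m - n * Fintype.card Q * m = m := by omega
    have := Nat.dvd_sub hdjm h1'
    rwa [hsub] at this
  have hd1 : d = 1 := by
    by_contra hne
    obtain ⟨p, hp, hpd⟩ := Nat.exists_prime_and_dvd hne
    exact (hn.2 p hp (hpd.trans hd)) (hmpi p hp (hpd.trans hdm))
  have := Function.isPeriodicPt_minimalPeriod F (some q)
  rw [← hdd, hd1] at this
  have : F^[1] (some q) = some q := this
  rw [hF, pstep_iterate_some, wpow_one] at this
  exact this

lemma imp_ii_i (π : Set ℕ)
    (h2 : ∀ (q : Q) (v : List (A × Bool)) (n : ℕ), IsPiPrimeNumber π n →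
      readWord δ q (wpow v n) = some q → readWord δ q v = some q) :
    ∀ w : List (A × Bool), pdom δ w = pim δ w →
      ∃ m : ℕ, 0 < m ∧ (∀ p : ℕ, p.Prime → p ∣ m → p ∈ π) ∧
        ∀ q ∈ pdom δ w, readWord δ q (wpow w m) = some q := by
  classical
  intro w hdomim
  set F := pstep δ w with hF
  have hper : ∀ q ∈ pdom δ w, q ∈ per δ w := by
    intro q hq
    have hdef : ∀ k, ∃ r, F^[k] (some q) = some r ∧ r ∈ pdom δ w := by
      intro k
      induction k with
      | zero => exact ⟨q, by simp, hq⟩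
      | succ k ih =>
        obtain ⟨r, hr, hrdom⟩ := ih
        obtain ⟨r₁, hr₁⟩ := Option.isSome_iff_exists.mp hrdom
        refine ⟨r₁, ?_, ?_⟩
        · rw [Function.iterate_succ_apply', hr]
          show (some r).bind (fun x => readWord δ x w) = some r₁
          simpa using hr₁
        · rw [hdomim]; exact ⟨r, hr₁⟩
    obtain ⟨r, hr, _⟩ := hdef (Fintype.card Q)
    exact periodic_of_long hinv (le_refl _) (by rw [hr]; simp)
  have hdpos : ∀ q ∈ pdom δ w, 0 < Function.minimalPeriod F (some q) := by
    intro q hq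
    obtain ⟨e, he, hpe⟩ := hper q hq
    exact Function.IsPeriodicPt.minimalPeriod_pos he hpe
  have hdpi : ∀ q ∈ pdom δ w, ∀ p : ℕ, p.Prime →
      p ∣ Function.minimalPeriod F (some q) → p ∈ π := by
    intro q hq
    set d := Function.minimalPeriod F (some q) with hdd
    obtain ⟨s, t, hst, hs, hspi, htpi⟩ := pi_decomp π d (hdpos q hq)
    have hloop : readWord δ q (wpow (wpow w s) t) = some q := by
      rw [← wpow_mul, ← hst, ← pstep_iterate_some (δ := δ)]
      exact Function.isPeriodicPt_minimalPeriod F (some q)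
    have := h2 q (wpow w s) t htpi hloop
    have hps : Function.IsPeriodicPt F s (some q) := by
      show F^[s] (some q) = some q
      rw [hF, pstep_iterate_some]; exact this
    have hdvd : d ∣ s := hps.minimalPeriod_dvd
    have ht1 : t = 1 := by
      have h' : s * t ∣ s * 1 := by rw [mul_one, ← hst]; exact hdvd
      exact Nat.dvd_one.mp ((Nat.mul_dvd_mul_iff_left hs).mp h')
    intro p hp hpd
    exact hspi p hp (by rw [hst, ht1, mul_one] at hpd; exact hpd)
  set D := Finset.univ.filter (fun q : Q => (readWord δ q w).isSome) with hD
  have hDmem : ∀ q : Q, q ∈ D ↔ q ∈ pdom δ w := by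
    intro q; rw [hD]; simp [pdom, Set.mem_setOf_eq]
  refine ⟨∏ q ∈ D, Function.minimalPeriod F (some q), ?_, ?_, ?_⟩
  · exact Finset.prod_pos fun q hq => hdpos q ((hDmem q).mp hq)
  · intro p hp hdvd
    obtain ⟨q, hq, hpq⟩ := (hp.prime).exists_mem_finset_dvd hdvd
    exact hdpi q ((hDmem q).mp hq) p hp hpq
  · intro q hq
    have hdvd : Function.minimalPeriod F (some q) ∣ ∏ q ∈ D, Function.minimalPeriod F (some q) :=
      Finset.dvd_prod_of_mem _ ((hDmem q).mpr hq)
    obtain ⟨c, hc⟩ := hdvd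
    have := (Function.isPeriodicPt_minimalPeriod F (some q)).mul_const c
    rw [← hc] at this
    rw [← pstep_iterate_some (δ := δ), ← hF]
    exact this

end Impl

section Red
variable {α : Type} [DecidableEq α]

def cancels (a b : α × Bool) : Prop := a.1 = b.1 ∧ a.2 = !b.2

def IsRed (w : List (α × Bool)) : Prop := List.Chain' (fun a b => ¬ cancels a b) w

lemma cancels_iff (a b : α × Bool) : cancels a b ↔ b = (a.1, !a.2) := by
  cases a; cases b
  simp only [cancels, Prod.mk.injEq]
  constructor
  · rintro ⟨h1, h2⟩; exact ⟨h1.symm, by simp [h2]⟩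
  · rintro ⟨h1, h2⟩; exact ⟨h1.symm, by simp [h2]⟩

lemma exists_cancel_of_not_isRed {w : List (α × Bool)} (h : ¬ IsRed w) :
    ∃ (w₁ : List (α × Bool)) (a : α × Bool) (w₂ : List (α × Bool)),
      w = w₁ ++ a :: (a.1, !a.2) :: w₂ := by
  induction w with
  | nil => exact absurd List.isChain_nil h
  | cons x t ih =>
    cases t with
    | nil => exact absurd (List.isChain_singleton x) h
    | cons y t' =>
      rw [IsRed, List.Chain', List.isChain_cons_cons] at h
      push_neg at h
      by_cases hc : cancels x y
      · exact ⟨[], x, t', by rw [← (cancels_iff x y).mp hc]; rfl⟩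
      · obtain ⟨w₁, a, w₂, hw⟩ := ih (h hc)
        exact ⟨x :: w₁, a, w₂, by rw [List.cons_append, ← hw]⟩

lemma isRed_iff_reduce {w : List (α × Bool)} : IsRed w ↔ FreeGroup.reduce w = w := by
  constructor
  · intro h
    induction w with
    | nil => rfl
    | cons x t ih =>
      have ht : IsRed t := h.tail
      rw [FreeGroup.reduce.cons, ih ht]
      cases t with
      | nil => rfl
      | cons y t' =>
        have hc : ¬ cancels x y := (List.isChain_cons_cons.mp h).1
        simp only [cancels] at hc
        simp only [if_neg hc]
  · intro h
    by_contra hred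
    obtain ⟨w₁, a, w₂, hw⟩ := exists_cancel_of_not_isRed hred
    have : FreeGroup.reduce w = w₁ ++ (a.1, a.2) :: (a.1, !a.2) :: w₂ := by
      rw [h, hw]
    exact FreeGroup.reduce.not this

lemma isRed_invRev {w : List (α × Bool)} (h : IsRed w) : IsRed (FreeGroup.invRev w) := by
  rw [IsRed, List.Chain', FreeGroup.invRev, List.isChain_reverse]
  apply List.isChain_map_of_isChain _ _ h
  intro a b hab hc
  apply hab
  rw [cancels_iff] at hc ⊢
  simp only [Prod.mk.injEq] at hc
  rw [Prod.ext_iff]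
  refine ⟨hc.1.symm, ?_⟩
  have := hc.2
  simp at this
  simp [this]

lemma isRed_wpow {c : List (α × Bool)} (h : IsRed (c ++ c)) (n : ℕ) : IsRed (wpow c n) := by
  have hc : IsRed c := h.infix ⟨[], c, by simp⟩
  induction n with
  | zero => exact List.isChain_nil
  | succ n ih =>
    rw [wpow_succ, IsRed, List.Chain', List.isChain_append]
    refine ⟨hc, ih, ?_⟩
    intro x hx y hy
    rcases List.isChain_append.mp h with ⟨-, -, hj⟩
    apply hj x hx
    cases c with
    | nil => rw [show wpow ([] : List (α × Bool)) n = [] by simp [wpow]] at hy; simp at hy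
    | cons z c' =>
      cases n with
      | zero => simp [wpow] at hy
      | succ n =>
        rw [wpow_succ, List.cons_append, List.head?_cons] at hy
        simp only [List.head?_cons]
        exact hy

end Red

section Red2
variable {α : Type} [DecidableEq α]

/-- every reduced word is `u ++ c ++ u⁻¹` with `c` cyclically reduced -/
lemma cyclic_decomp : ∀ (w : List (α × Bool)), IsRed w →
    ∃ u c, w = u ++ c ++ FreeGroup.invRev u ∧ IsRed (c ++ c) := by
  suffices H : ∀ (n : ℕ) (w : List (α × Bool)), w.length ≤ n → IsRed w →
      ∃ u c, w = u ++ c ++ FreeGroup.invRev u ∧ IsRed (c ++ c) by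
    exact fun w => H w.length w le_rfl
  intro n
  induction n with
  | zero =>
    intro w hl _
    rw [List.length_eq_zero_iff.mp (Nat.le_zero.mp hl)]
    exact ⟨[], [], rfl, List.isChain_nil⟩
  | succ n ih =>
  intro w hl hw
  rcases List.eq_nil_or_concat' w with rfl | ⟨t, b, rfl⟩
  · exact ⟨[], [], rfl, List.isChain_nil⟩
  cases t with
  | nil =>
    refine ⟨[], [b], by simp, ?_⟩
    rw [IsRed]
    refine List.isChain_cons_cons.mpr ⟨?_, List.isChain_singleton b⟩
    rintro ⟨-, h2⟩
    simp at h2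
  | cons a t' =>
    have hgl : (a :: t' ++ [b]).getLast? = some b := by
      rw [show a :: t' ++ [b] = (a :: t') ++ [b] from rfl, List.getLast?_concat]
    by_cases hc : cancels b a
    · have hb : b = (a.1, !a.2) := by
        rcases hc with ⟨h1, h2⟩
        rw [Prod.ext_iff]
        exact ⟨h1, h2⟩
      have ht' : IsRed t' := hw.infix ⟨[a], [b], by simp⟩
      obtain ⟨u, c, hdec, hcc⟩ := ih t' (by simp at hl ⊢; omega) ht'
      refine ⟨a :: u, c, ?_, hcc⟩
      rw [invRev_cons, hb, hdec]
      simp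
    · refine ⟨[], a :: t' ++ [b], by simp, ?_⟩
      rw [IsRed, List.Chain', List.isChain_append]
      refine ⟨hw, hw, ?_⟩
      intro x hxl y hyh
      have hxb : x = b := by rw [hgl] at hxl; exact (by simpa using hxl : b = x).symm
      have hya : y = a := by exact (by simpa using hyh : a = y).symm
      rw [hxb, hya]
      exact hc
end Red2

section Run
variable {Q A : Type} {δ : Q → A × Bool → Option Q}

lemma readWord_append_some {q p : Q} {u v : List (A × Bool)} :
    readWord δ q (u ++ v) = some p ↔
      ∃ r, readWord δ q u = some r ∧ readWord δ r v = some p := by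
  rw [readWord_append]
  cases h : readWord δ q u <;> simp

lemma readWord_cons_some {q p : Q} {x : A × Bool} {u : List (A × Bool)} :
    readWord δ q (x :: u) = some p ↔ ∃ r, δ q x = some r ∧ readWord δ r u = some p := by
  rw [readWord_cons]
  cases h : δ q x <;> simp

lemma readWord_singleton {q p : Q} {x : A × Bool} :
    readWord δ q [x] = some p ↔ δ q x = some p := by
  rw [readWord_cons_some]
  constructor
  · rintro ⟨r, h1, h2⟩
    simp only [readWord_nil, Option.some_inj] at h2
    rwa [h2] at h1
  · intro h; exact ⟨p, h, rfl⟩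

lemma readWord_concat_some {q p : Q} {x : A × Bool} {u : List (A × Bool)} :
    readWord δ q (u ++ [x]) = some p ↔ ∃ r, readWord δ q u = some r ∧ δ r x = some p := by
  rw [readWord_append_some]
  simp only [readWord_singleton]

lemma invRev_concat (s : List (A × Bool)) (x : A × Bool) :
    FreeGroup.invRev (s ++ [x]) = (x.1, !x.2) :: FreeGroup.invRev s := by
  simp [FreeGroup.invRev]

end Run

section Shift
variable {α : Type} [DecidableEq α]

lemma isRed_shift {a : α × Bool} {c : List (α × Bool)} :
    IsRed ((a :: c) ++ (a :: c)) ↔ IsRed ((c ++ [a]) ++ (c ++ [a])) := by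
  constructor
  · intro h
    refine (isRed_wpow h 3).infix ⟨[a], c, ?_⟩
    simp [wpow, List.replicate]
  · intro h
    refine (isRed_wpow h 3).infix ⟨c, [a], ?_⟩
    simp [wpow, List.replicate]

lemma mk_conj (s c : List (α × Bool)) :
    FreeGroup.mk (s ++ c ++ FreeGroup.invRev s)
      = FreeGroup.mk s * FreeGroup.mk c * (FreeGroup.mk s)⁻¹ := by
  rw [← FreeGroup.mul_mk, ← FreeGroup.mul_mk, ← FreeGroup.inv_mk]

lemma mk_single_inv (a : α × Bool) :
    FreeGroup.mk [(a.1, !a.2)] = (FreeGroup.mk [a])⁻¹ := by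
  rw [FreeGroup.inv_mk]
  rfl

end Shift

section RunReduce
variable {Q A : Type} [DecidableEq A] {δ : Q → A × Bool → Option Q}
  (hinv : ∀ (p q : Q) (a : A) (b : Bool), δ p (a, b) = some q ↔ δ q (a, !b) = some p)
include hinv

lemma readWord_reduce {p r : Q} {w : List (A × Bool)}
    (h : readWord δ p w = some r) : readWord δ p (FreeGroup.reduce w) = some r := by
  suffices H : ∀ (n : ℕ) (w : List (A × Bool)), w.length ≤ n →
      readWord δ p w = some r → readWord δ p (FreeGroup.reduce w) = some r by
    exact H w.length w le_rfl h
  clear h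
  intro n
  induction n with
  | zero =>
    intro w hl h
    rw [List.length_eq_zero_iff.mp (Nat.le_zero.mp hl)] at h ⊢
    exact h
  | succ n ih =>
    intro w hl h
    by_cases hred : IsRed w
    · rwa [isRed_iff_reduce.mp hred]
    · obtain ⟨w₁, a, w₂, hw⟩ := exists_cancel_of_not_isRed hred
      have hrun : readWord δ p (w₁ ++ w₂) = some r := readWord_cancel hinv (hw ▸ h)
      have hstep : FreeGroup.Red.Step w (w₁ ++ w₂) := by
        rw [hw]
        exact (show FreeGroup.Red.Step (w₁ ++ (a.1, a.2) :: (a.1, !a.2) :: w₂) (w₁ ++ w₂)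
          from FreeGroup.Red.Step.not)
      rw [FreeGroup.reduce.Step.eq hstep]
      apply ih (w₁ ++ w₂) _ hrun
      have := congrArg List.length hw
      simp at this ⊢
      omega
end RunReduce

section ConjLoop
variable {Q A : Type} [DecidableEq A] {δ : Q → A × Bool → Option Q} {q₀ : Q}
  (hinv : ∀ (p q : Q) (a : A) (b : Bool), δ p (a, b) = some q ↔ δ q (a, !b) = some p)
include hinv

lemma conjloop' : True := trivial

lemma conjloop :
    ∀ (s : List (A × Bool)) (p : Q) (c : List (A × Bool)), IsRed s → IsRed (c ++ c) →
      readWord δ q₀ s = some p →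
      readWord δ q₀ (FreeGroup.reduce (s ++ c ++ FreeGroup.invRev s)) = some q₀ →
      readWord δ p c = some p := by
  suffices H : ∀ (n : ℕ) (s : List (A × Bool)), s.length ≤ n →
      ∀ (p : Q) (c : List (A × Bool)), IsRed s → IsRed (c ++ c) →
      readWord δ q₀ s = some p →
      readWord δ q₀ (FreeGroup.reduce (s ++ c ++ FreeGroup.invRev s)) = some q₀ →
      readWord δ p c = some p by
    exact fun s p c => H s.length s le_rfl p c
  intro n
  induction n with
  | zero =>
    intro s hl p c _ hcc hs hloop
    rw [List.length_eq_zero_iff.mp (Nat.le_zero.mp hl)] at hs hloop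
    simp only [readWord_nil, Option.some_inj] at hs
    subst hs
    have hcred : IsRed c := hcc.infix ⟨[], c, by simp⟩
    rw [show ([] : List (A × Bool)) ++ c ++ FreeGroup.invRev [] = c by simp,
      isRed_iff_reduce.mp hcred] at hloop
    exact hloop
  | succ n ih =>
    intro s hl p c hsred hcc hs hloop
    rcases List.eq_nil_or_concat' s with rfl | ⟨s', x, rfl⟩
    · simp only [readWord_nil, Option.some_inj] at hs
      subst hs
      have hcred : IsRed c := hcc.infix ⟨[], c, by simp⟩
      rw [show ([] : List (A × Bool)) ++ c ++ FreeGroup.invRev [] = c by simp,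
        isRed_iff_reduce.mp hcred] at hloop
      exact hloop
    cases c with
    | nil => rfl
    | cons a ctl =>
    -- endpoints of s = s' ++ [x]
    obtain ⟨p'', hs', hx⟩ := readWord_concat_some.mp hs
    have hs'red : IsRed s' := hsred.infix ⟨[], [x], by simp⟩
    have hs'len : s'.length ≤ n := by simp at hl; omega
    by_cases hc1 : cancels x a
    · -- cancellation at junction s·c : x = (a.1, !a.2)
      have hxa : x = (a.1, !a.2) := Prod.ext_iff.mpr ⟨hc1.1, hc1.2⟩
      subst hxa
      -- δ p a = some p''
      have hpa : δ p a = some p'' := by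
        have := (hinv p'' p a.1 (!a.2)).mp hx
        simpa using this
      -- transfer the loop hypothesis
      have hmk : FreeGroup.mk ((s' ++ [(a.1, !a.2)]) ++ (a :: ctl)
            ++ FreeGroup.invRev (s' ++ [(a.1, !a.2)]))
          = FreeGroup.mk (s' ++ (ctl ++ [a]) ++ FreeGroup.invRev s') := by
        rw [mk_conj, mk_conj, show a :: ctl = [a] ++ ctl from rfl]
        simp only [← FreeGroup.mul_mk]
        rw [mk_single_inv]
        group
      have hloop' : readWord δ q₀
          (FreeGroup.reduce (s' ++ (ctl ++ [a]) ++ FreeGroup.invRev s')) = some q₀ := by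
        rw [← FreeGroup.reduce.sound hmk]
        exact hloop
      have hcc' : IsRed ((ctl ++ [a]) ++ (ctl ++ [a])) := isRed_shift.mp hcc
      have hIH := ih s' hs'len p'' (ctl ++ [a]) hs'red hcc' hs' hloop'
      obtain ⟨rr, hrr, hra⟩ := readWord_concat_some.mp hIH
      -- injectivity: rr = p
      have h1 : δ p'' (a.1, !a.2) = some rr := (hinv rr p'' a.1 a.2).mp hra
      have hrp : rr = p := by
        rw [h1] at hx
        exact Option.some_inj.mp hx
      rw [readWord_cons_some]
      exact ⟨p'', hpa, by rwa [hrp] at hrr⟩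
    · by_cases hc2 : x = (a :: ctl).getLast (List.cons_ne_nil a ctl)
      · -- cancellation at junction c·s⁻¹ : x = last c
        set cin := (a :: ctl).dropLast with hcin
        have hcsplit : a :: ctl = cin ++ [x] := by
          rw [hc2, hcin]
          exact (List.dropLast_append_getLast (List.cons_ne_nil a ctl)).symm
        have hmk : FreeGroup.mk ((s' ++ [x]) ++ (a :: ctl) ++ FreeGroup.invRev (s' ++ [x]))
            = FreeGroup.mk (s' ++ (x :: cin) ++ FreeGroup.invRev s') := by
          rw [hcsplit, mk_conj, mk_conj, show x :: cin = [x] ++ cin from rfl]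
          simp only [← FreeGroup.mul_mk]
          group
        have hloop' : readWord δ q₀
            (FreeGroup.reduce (s' ++ (x :: cin) ++ FreeGroup.invRev s')) = some q₀ := by
          rw [← FreeGroup.reduce.sound hmk]
          exact hloop
        have hcc' : IsRed ((x :: cin) ++ (x :: cin)) := isRed_shift.mpr (hcsplit ▸ hcc)
        have hIH := ih s' hs'len p'' (x :: cin) hs'red hcc' hs' hloop'
        obtain ⟨w1, hw1, hw2⟩ := readWord_cons_some.mp hIH
        have hw1p : w1 = p := by rw [hx] at hw1; exact (Option.some_inj.mp hw1).symm
        subst hw1p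
        rw [hcsplit, readWord_concat_some]
        exact ⟨p'', hw2, hx⟩
      · -- no cancellation: the word is already reduced
        have hW : IsRed ((s' ++ [x]) ++ (a :: ctl) ++ FreeGroup.invRev (s' ++ [x])) := by
          have hcred : IsRed (a :: ctl) := hcc.infix ⟨[], a :: ctl, by simp⟩
          have hinvred : IsRed (FreeGroup.invRev (s' ++ [x])) := isRed_invRev hsred
          rw [IsRed, List.Chain', List.isChain_append]
          refine ⟨List.isChain_append.mpr ⟨hsred, hcred, ?_⟩, hinvred, ?_⟩
          · intro u hu v hv
            have hux : u = x := by
              rw [List.getLast?_concat] at hu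
              exact (by simpa using hu : x = u).symm
            have hva : v = a := by exact (by simpa using hv : a = v).symm
            rw [hux, hva]; exact hc1
          · intro u hu v hv
            rw [invRev_concat, List.head?_cons] at hv
            have hvx : v = (x.1, !x.2) := by simpa using hv.symm
            have hulast : u = (a :: ctl).getLast (List.cons_ne_nil a ctl) := by
              rw [List.getLast?_append_of_ne_nil (s' ++ [x]) (by simp : (a :: ctl) ≠ []),
                List.getLast?_eq_getLast_of_ne_nil (List.cons_ne_nil a ctl)] at hu
              exact (Option.some_inj.mp hu).symm
            intro hcan
            apply hc2
            rw [← hulast]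
            rcases hcan with ⟨e1, e2⟩
            rw [hvx] at e1 e2
            simp only at e1 e2
            rw [Prod.ext_iff]
            refine ⟨e1.symm, ?_⟩
            simp at e2
            simp [e2]
        rw [isRed_iff_reduce.mp hW] at hloop
        obtain ⟨p1, hp1, hrest⟩ := readWord_append_some.mp hloop
        obtain ⟨p2, hp2a, hp2b⟩ := readWord_append_some.mp hp1
        have hp1p : p1 = p := by
          have h' := (readWord_invRev hinv).mpr hrest
          rw [h'] at hs
          exact Option.some_inj.mp hs
        have hp2p : p2 = p := by
          rw [hp2a] at hs
          exact Option.some_inj.mp hs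
        subst hp1p
        subst hp2p
        exact hp2b
end ConjLoop

lemma conjpow {G : Type*} [Group G] (g h : G) (n : ℕ) :
    (g * h * g⁻¹) ^ n = g * h ^ n * g⁻¹ := by
  induction n with
  | zero => simp
  | succ n ih => rw [pow_succ, pow_succ, ih]; group

lemma mk_wpow {α : Type} (c : List (α × Bool)) (n : ℕ) :
    FreeGroup.mk (wpow c n) = (FreeGroup.mk c) ^ n := by
  rw [FreeGroup.pow_mk]; rfl

section Main
variable {Q A : Type} [DecidableEq A] {δ : Q → A × Bool → Option Q} {q₀ : Q}
  {K : Subgroup (FreeGroup A)}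
  (hinv : ∀ (p q : Q) (a : A) (b : Bool), δ p (a, b) = some q ↔ δ q (a, !b) = some p)
  (hlink : ∀ w : List (A × Bool), FreeGroup.reduce w = w →
      (FreeGroup.mk w ∈ K ↔ readWord δ q₀ w = some q₀))
include hinv

omit hlink in
/-- extracting the cyclically reduced power loop -/
lemma pow_conj_loop {u c : List (A × Bool)} {q p : Q} {n : ℕ}
    (hu : readWord δ q u = some p)
    (h : readWord δ q (wpow (u ++ c ++ FreeGroup.invRev u) n) = some q) :
    readWord δ p (wpow c n) = some p := by
  set v := u ++ c ++ FreeGroup.invRev u with hv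
  have key : ∀ (k : ℕ) (r : Q), readWord δ q (wpow v k ++ u) = some r →
      readWord δ p (wpow c k) = some r := by
    intro k
    induction k with
    | zero =>
      intro r hr
      simp only [wpow_zero, List.nil_append] at hr
      rw [hu] at hr
      simpa using hr
    | succ k ih =>
      intro r hr
      have hw : wpow v (k+1) ++ u = (wpow v k ++ u) ++ c ++ (FreeGroup.invRev u ++ u) := by
        rw [show k + 1 = k + 1 from rfl, wpow_add, wpow_one, hv]
        simp
      rw [hw] at hr
      obtain ⟨t₂, h12, h3⟩ := readWord_append_some.mp hr
      obtain ⟨t₁, h1, h2⟩ := readWord_append_some.mp h12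
      obtain ⟨t₃, h3a, h3b⟩ := readWord_append_some.mp h3
      have ht₂ : readWord δ t₃ u = some t₂ := (readWord_invRev hinv).mpr h3a
      have hrt₂ : r = t₂ := by rw [ht₂] at h3b; exact (Option.some_inj.mp h3b).symm
      rw [show k + 1 = k + 1 from rfl, wpow_add, wpow_one]
      exact readWord_append_some.mpr ⟨t₁, ih t₁ h1, by rw [hrt₂]; exact h2⟩
  apply key n p
  rw [readWord_append_some]
  exact ⟨q, h, hu⟩

omit hlink in
/-- transfer of power loops along run-preserving word replacement -/
lemma wpow_run_transfer {v v' : List (A × Bool)}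
    (hvv : ∀ (p r : Q), readWord δ p v = some r → readWord δ p v' = some r) :
    ∀ (k : ℕ) (p r : Q), readWord δ p (wpow v k) = some r →
      readWord δ p (wpow v' k) = some r := by
  intro k
  induction k with
  | zero => intro p r h; simpa using h
  | succ k ih =>
    intro p r h
    rw [wpow_succ] at h ⊢
    obtain ⟨t, h1, h2⟩ := readWord_append_some.mp h
    exact readWord_append_some.mpr ⟨t, hvv p t h1, ih t r h2⟩

include hlink

lemma imp_ii_iii (π : Set ℕ)
    (h2 : ∀ (q : Q) (v : List (A × Bool)) (n : ℕ), IsPiPrimeNumber π n →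
      readWord δ q (wpow v n) = some q → readWord δ q v = some q) :
    ∀ (x : FreeGroup A) (n : ℕ), IsPiPrimeNumber π n → x ^ n ∈ K → x ∈ K := by
  intro x n hn hxn
  have hred : FreeGroup.reduce x.toWord = x.toWord := FreeGroup.reduce_toWord x
  have hmkw : FreeGroup.mk x.toWord = x := FreeGroup.mk_toWord
  obtain ⟨u, c, hdec, hcc⟩ := cyclic_decomp x.toWord (isRed_iff_reduce.mpr hred)
  rcases List.eq_nil_or_concat' c with rfl | ⟨cin, clast, hcne⟩
  · -- x = 1
    have : x = 1 := by
      rw [← hmkw, hdec, show u ++ [] ++ FreeGroup.invRev u = u ++ FreeGroup.invRev u by simp,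
        ← FreeGroup.mul_mk, ← FreeGroup.inv_mk, mul_inv_cancel]
    rw [this]
    exact K.one_mem
  have hcne' : c ≠ [] := by rw [hcne]; simp
  -- the word u ++ c^n ++ u⁻¹ is reduced
  have hured : IsRed u := (isRed_iff_reduce.mpr hred).infix ⟨[], c ++ FreeGroup.invRev u, by rw [hdec]; simp⟩
  have hpowred : IsRed (u ++ wpow c n ++ FreeGroup.invRev u) := by
    have hwred : IsRed (u ++ c ++ FreeGroup.invRev u) := hdec ▸ isRed_iff_reduce.mpr hred
    rcases List.isChain_append.mp hwred with ⟨huc, hinvu, hj2⟩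
    rcases List.isChain_append.mp huc with ⟨hu', hc', hj1⟩
    rw [IsRed, List.Chain', List.isChain_append]
    refine ⟨List.isChain_append.mpr ⟨hu', isRed_wpow hcc n, ?_⟩, hinvu, ?_⟩
    · intro a ha b hb
      apply hj1 a ha
      rcases Nat.exists_eq_add_of_lt hn.1 with ⟨k, hk⟩
      rw [show n = 1 + k by omega, wpow_add, wpow_one] at hb
      rcases c with - | ⟨c0, ctl⟩
      · exact absurd rfl hcne'
      · rw [List.cons_append, List.head?_cons] at hb
        simpa using hb
    · intro a ha b hb
      apply hj2 a ?_ b hb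
      rcases Nat.exists_eq_add_of_lt hn.1 with ⟨k, hk⟩
      rw [show n = k + 1 by omega, wpow_add, wpow_one, ← List.append_assoc,
        List.getLast?_append_of_ne_nil _ hcne'] at ha
      rw [List.getLast?_append_of_ne_nil _ hcne']
      exact ha
  -- x^n ∈ K gives a loop reading u ++ c^n ++ u⁻¹
  have hmkpow : FreeGroup.mk (u ++ wpow c n ++ FreeGroup.invRev u) = x ^ n := by
    rw [mk_conj, mk_wpow, ← conjpow, ← mk_conj, ← hdec, hmkw]
  have hloop : readWord δ q₀ (u ++ wpow c n ++ FreeGroup.invRev u) = some q₀ := by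
    rw [← hlink _ (isRed_iff_reduce.mp hpowred), hmkpow]
    exact hxn
  obtain ⟨p1, hrest, hback⟩ := readWord_append_some.mp hloop
  obtain ⟨p, hp, hcpow⟩ := readWord_append_some.mp hrest
  have hp1 : p1 = p := by
    have h' := (readWord_invRev hinv).mpr hback
    rw [hp] at h'
    exact (Option.some_inj.mp h').symm
  rw [hp1] at hcpow
  have hcloop := h2 p c n hn hcpow
  -- rebuild the loop for w = u ++ c ++ u⁻¹
  rw [← hmkw, hdec, hlink _ (by rw [← hdec]; exact hred)]
  exact readWord_append_some.mpr ⟨p, readWord_append_some.mpr ⟨p, hp, hcloop⟩,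
    (readWord_invRev hinv).mp hp⟩

end Main

section Main2
variable {Q A : Type} [DecidableEq A] {δ : Q → A × Bool → Option Q} {q₀ : Q}
  {K : Subgroup (FreeGroup A)}
  (hinv : ∀ (p q : Q) (a : A) (b : Bool), δ p (a, b) = some q ↔ δ q (a, !b) = some p)
  (hconn : ∀ q : Q, ∃ w : List (A × Bool), readWord δ q₀ w = some q)
  (hlink : ∀ w : List (A × Bool), FreeGroup.reduce w = w →
      (FreeGroup.mk w ∈ K ↔ readWord δ q₀ w = some q₀))
include hinv hconn hlink

lemma imp_iii_ii (π : Set ℕ)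
    (h3 : ∀ (x : FreeGroup A) (n : ℕ), IsPiPrimeNumber π n → x ^ n ∈ K → x ∈ K) :
    ∀ (q : Q) (v : List (A × Bool)) (n : ℕ), IsPiPrimeNumber π n →
      readWord δ q (wpow v n) = some q → readWord δ q v = some q := by
  -- first, the case of reduced v
  have main : ∀ (q : Q) (v : List (A × Bool)) (n : ℕ), IsRed v → IsPiPrimeNumber π n →
      readWord δ q (wpow v n) = some q → readWord δ q v = some q := by
    intro q v n hvred hn hloop
    obtain ⟨u, c, hdec, hcc⟩ := cyclic_decomp v hvred
    -- run of v from q is defined (v is a prefix of v^n)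
    have hvrun : ∃ r, readWord δ q v = some r := by
      rcases Nat.exists_eq_add_of_lt hn.1 with ⟨k, hk⟩
      rw [show n = 1 + k by omega, wpow_add, wpow_one] at hloop
      obtain ⟨r, h1, -⟩ := readWord_append_some.mp hloop
      exact ⟨r, h1⟩
    obtain ⟨r, hr⟩ := hvrun
    rw [hdec] at hr
    obtain ⟨p1, h12, h3'⟩ := readWord_append_some.mp hr
    obtain ⟨p, hu, hcrun⟩ := readWord_append_some.mp h12
    -- c^n loops at p
    have hcpow : readWord δ p (wpow c n) = some p :=
      pow_conj_loop hinv hu (by rw [← hdec]; exact hloop)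
    -- choose a reduced path s from q₀ to p
    obtain ⟨s₀, hs₀⟩ := hconn p
    have hs : readWord δ q₀ (FreeGroup.reduce s₀) = some p := readWord_reduce hinv hs₀
    set s := FreeGroup.reduce s₀ with hsdef
    have hsred : IsRed s := isRed_iff_reduce.mpr FreeGroup.reduce.idem
    -- z^n ∈ K where z = mk (s ++ c ++ invRev s)
    have hWrun : readWord δ q₀ (s ++ wpow c n ++ FreeGroup.invRev s) = some q₀ :=
      readWord_append_some.mpr ⟨p, readWord_append_some.mpr ⟨p, hs, hcpow⟩,
        (readWord_invRev hinv).mp hs⟩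
    have hznK : FreeGroup.mk (s ++ wpow c n ++ FreeGroup.invRev s) ∈ K := by
      have hrunred := readWord_reduce hinv hWrun
      have := (hlink _ FreeGroup.reduce.idem).mpr hrunred
      rwa [FreeGroup.reduce.self] at this
    have hzn : FreeGroup.mk (s ++ wpow c n ++ FreeGroup.invRev s)
        = (FreeGroup.mk (s ++ c ++ FreeGroup.invRev s)) ^ n := by
      rw [mk_conj, mk_conj, mk_wpow, conjpow]
    have hzK : FreeGroup.mk (s ++ c ++ FreeGroup.invRev s) ∈ K :=
      h3 _ n hn (by rw [← hzn]; exact hznK)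
    -- hence the reduced form of s c s⁻¹ loops at q₀
    have hzloop : readWord δ q₀
        (FreeGroup.reduce (s ++ c ++ FreeGroup.invRev s)) = some q₀ := by
      rw [← hlink _ FreeGroup.reduce.idem, FreeGroup.reduce.self]
      exact hzK
    -- conjloop: c loops at p
    have hcloop : readWord δ p c = some p := conjloop hinv s p c hsred hcc hs hzloop
    -- rebuild
    rw [hdec]
    exact readWord_append_some.mpr ⟨p, readWord_append_some.mpr ⟨p, hu, hcloop⟩,
      (readWord_invRev hinv).mp hu⟩
  -- general case: reduce v first
  intro q v n hn hloop
  have hvv : ∀ (p r : Q), readWord δ p v = some r →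
      readWord δ p (FreeGroup.reduce v) = some r := fun p r h => readWord_reduce hinv h
  have hloop' : readWord δ q (wpow (FreeGroup.reduce v) n) = some q :=
    wpow_run_transfer hinv hvv n q q hloop
  have hred := main q (FreeGroup.reduce v) n (isRed_iff_reduce.mpr FreeGroup.reduce.idem)
    hn hloop'
  -- v's run from q is defined
  rcases Nat.exists_eq_add_of_lt hn.1 with ⟨k, hk⟩
  rw [show n = 1 + k by omega, wpow_add, wpow_one] at hloop
  obtain ⟨r, h1, -⟩ := readWord_append_some.mp hloop
  have h2 := hvv q r h1
  rw [hred] at h2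
  rw [h1, Option.some_inj.mp h2]
end Main2

/-- For the Stallings automaton `S(K) = (Q, A, δ, q₀)` of a f.g. subgroup
`K ≤ F_A` and a set `π` of primes, TFAE: (i) every group `H`-class of `M(K)` is a
`π`-group (every `δ_w` with `dom δ_w = im δ_w` has a power `δ_{w^m}`, `m` a `π`-number,
fixing its domain pointwise); (ii) for every state `q`, word `v` and `π'`-number `n`,
if `v^n` labels a loop at `q` then so does `v`; (iii) for every `x ∈ F_A` and
`π'`-number `n`, `x^n ∈ K` implies `x ∈ K`. -/
theorem stmt_11 {A Q : Type} [DecidableEq A] [Fintype Q]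
    (K : Subgroup (FreeGroup A)) (δ : Q → A × Bool → Option Q) (q₀ : Q)
    (π : Set ℕ) (hπ : ∀ p ∈ π, Nat.Prime p)
    (hinv : ∀ (p q : Q) (a : A) (b : Bool), δ p (a, b) = some q ↔ δ q (a, !b) = some p)
    (hconn : ∀ q : Q, ∃ w : List (A × Bool), readWord δ q₀ w = some q)
    (hdeg : ∀ q : Q, q ≠ q₀ → 2 ≤ {x : A × Bool | (δ q x).isSome}.ncard)
    (hlink : ∀ w : List (A × Bool), FreeGroup.reduce w = w →
      (FreeGroup.mk w ∈ K ↔ readWord δ q₀ w = some q₀)) :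
    List.TFAE
      [∀ w : List (A × Bool), pdom δ w = pim δ w →
          ∃ m : ℕ, 0 < m ∧ (∀ p : ℕ, p.Prime → p ∣ m → p ∈ π) ∧
            ∀ q ∈ pdom δ w, readWord δ q (wpow w m) = some q,
       ∀ (q : Q) (v : List (A × Bool)) (n : ℕ), IsPiPrimeNumber π n →
          readWord δ q (wpow v n) = some q → readWord δ q v = some q,
       ∀ (x : FreeGroup A) (n : ℕ), IsPiPrimeNumber π n →
          x ^ n ∈ K → x ∈ K] := by
  tfae_have 1 → 2 := imp_i_ii hinv π
  tfae_have 2 → 1 := imp_ii_i hinv π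
  tfae_have 2 → 3 := imp_ii_iii hinv hlink π
  tfae_have 3 → 2 := imp_iii_ii hinv hconn hlink π
  tfae_finish
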